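/- For integers a, b ≥ 0, the generating function identity holds: Σ_{ν≥1} W_ν t^ν = ((a+b)t - b t^2) / (1 - (a+b+2)t + (b+1)t^2) as formal power series, where W_ν = Σ_{k=1}^{ν} Σ_{j=0}^{k} a^j b^{k-j} C(k,j) C(ν+j-1, ν-k). Equivalently, (1 - (a+b+2)t + (b+1)t^2) · Σ_{ν≥1} W_ν t^ν = (a+b)t - b t^2. -/

import Mathlib

open Finset

/-- The geometric series `1 + X + X² + ⋯` over `ℤ`. -/
noncomputable def geoZ : PowerSeries ℤ := PowerSeries.mk 1

lemma geoZ_mul : (1 - PowerSeries.X) * geoZ = 1 := by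
  rw [geoZ, mul_comm]; exact PowerSeries.mk_one_mul_one_sub_eq_one ℤ

lemma coeff_geoZ_pow (d n : ℕ) :
    PowerSeries.coeff n (geoZ ^ (d + 1)) = (Nat.choose (d + n) d : ℤ) := by
  rw [geoZ, PowerSeries.mk_one_pow_eq_mk_choose_add, PowerSeries.coeff_mk]

/-- The part generating function `Σ (an+b) tⁿ = a t/(1-t)² + b t/(1-t)`. -/
noncomputable def pgf (a b : ℕ) : PowerSeries ℤ :=
  PowerSeries.C (a : ℤ) * PowerSeries.X * geoZ ^ 2 +
    PowerSeries.C (b : ℤ) * PowerSeries.X * geoZ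

lemma pgf_eq_X_mul (a b : ℕ) : pgf a b
    = PowerSeries.X * (PowerSeries.C (a : ℤ) * geoZ ^ 2 + PowerSeries.C (b : ℤ) * geoZ) := by
  rw [pgf]; ring

lemma coeff_pgf_pow_of_lt (a b k ν : ℕ) (hk : ν < k) :
    PowerSeries.coeff ν (pgf a b ^ k) = 0 := by
  rw [pgf_eq_X_mul, mul_pow, PowerSeries.coeff_X_pow_mul', if_neg (by omega)]

lemma coeff_pgf_pow (a b k ν : ℕ) (h1 : 1 ≤ k) (h2 : k ≤ ν) :
    PowerSeries.coeff ν (pgf a b ^ k) =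
      ∑ j ∈ Finset.range (k + 1),
        (a : ℤ) ^ j * (b : ℤ) ^ (k - j) * Nat.choose k j *
          Nat.choose (ν + j - 1) (ν - k) := by
  rw [pgf, add_pow, map_sum]
  refine Finset.sum_congr rfl fun j hj => ?_
  have hjk : j ≤ k := by simpa using Nat.lt_succ_iff.mp (Finset.mem_range.mp hj)
  have hterm : (PowerSeries.C (a : ℤ) * PowerSeries.X * geoZ ^ 2) ^ j *
      (PowerSeries.C (b : ℤ) * PowerSeries.X * geoZ) ^ (k - j) *
        ((Nat.choose k j : ℕ) : PowerSeries ℤ)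
      = PowerSeries.C ((a : ℤ) ^ j * (b : ℤ) ^ (k - j) * (Nat.choose k j : ℤ)) *
        (PowerSeries.X ^ k * geoZ ^ ((k + j - 1) + 1)) := by
    obtain ⟨m, rfl⟩ : ∃ m, k = j + m := ⟨k - j, by omega⟩
    have hkj : j + m + j - 1 + 1 = 2 * j + m := by omega
    have hkj2 : j + m - j = m := by omega
    rw [hkj, hkj2, map_mul, map_mul, map_pow, map_pow]
    simp only [map_natCast]
    ring
  rw [hterm, PowerSeries.coeff_C_mul, PowerSeries.coeff_X_pow_mul', if_pos h2,
    coeff_geoZ_pow]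
  have harith : (k + j - 1) + (ν - k) = ν + j - 1 := by omega
  rw [harith]
  have hsymm : Nat.choose (ν + j - 1) (k + j - 1) = Nat.choose (ν + j - 1) (ν - k) := by
    have h3 : k + j - 1 ≤ ν + j - 1 := by omega
    have h4 : (ν + j - 1) - (k + j - 1) = ν - k := by omega
    rw [← Nat.choose_symm h3, h4]
  rw [hsymm]

/-- The generating function of `W ν = Σ_{k=1}^{ν} Σ_{j=0}^{k} aʲ b^{k-j} C(k,j) C(ν+j-1, ν-k)`,
the total number of `(an+b)`-color compositions of `ν`, satisfies
`(1 - (a+b+2)t + (b+1)t²) · Σ_{ν≥1} W_ν t^ν = (a+b)t - bt²`. -/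
theorem colored_comp_gf (a b : ℕ) (W : PowerSeries ℤ)
    (h0 : PowerSeries.coeff 0 W = 0)
    (h : ∀ ν : ℕ, 1 ≤ ν → PowerSeries.coeff ν W =
      ∑ k ∈ Finset.Icc 1 ν, ∑ j ∈ Finset.range (k + 1),
        (a : ℤ) ^ j * (b : ℤ) ^ (k - j) * Nat.choose k j *
          Nat.choose (ν + j - 1) (ν - k)) :
    (1 - PowerSeries.C ((a : ℤ) + b + 2) * PowerSeries.X +
        PowerSeries.C ((b : ℤ) + 1) * PowerSeries.X ^ 2) * W =
      PowerSeries.C ((a : ℤ) + b) * PowerSeries.X -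
        PowerSeries.C (b : ℤ) * PowerSeries.X ^ 2 := by
  set f := pgf a b with hf
  -- coefficients of partial geometric sums of `f` agree with `W` low down
  have hS : ∀ n j : ℕ, j ≤ n →
      PowerSeries.coeff j (∑ k ∈ Finset.Icc 1 n, f ^ k) = PowerSeries.coeff j W := by
    intro n j hjn
    rw [map_sum, ← Finset.sum_subset (Finset.Icc_subset_Icc_right hjn)
      (fun k hk hk' => coeff_pgf_pow_of_lt a b k j (by
        simp only [Finset.mem_Icc] at hk hk'; omega))]
    rcases Nat.eq_zero_or_pos j with rfl | hj
    · simp [h0]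
    · rw [h j hj]
      exact Finset.sum_congr rfl fun k hk => by
        have := Finset.mem_Icc.mp hk
        exact coeff_pgf_pow a b k j this.1 this.2
  -- key identity : (1 - f) * W = f
  have key : (1 - f) * W = f := by
    ext n
    have hmulW : PowerSeries.coeff n (f * W) =
        PowerSeries.coeff n (f * ∑ k ∈ Finset.Icc 1 n, f ^ k) := by
      rw [PowerSeries.coeff_mul, PowerSeries.coeff_mul]
      refine Finset.sum_congr rfl fun p hp => ?_
      have hpn := Finset.HasAntidiagonal.mem_antidiagonal.mp hp
      rw [hS n p.2 (by omega)]
    have hgeo : f * (∑ k ∈ Finset.Icc 1 n, f ^ k) + f = ∑ k ∈ Finset.Icc 1 (n + 1), f ^ k := by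
      have e1 : Finset.Icc 1 n = Finset.Ico 1 (n + 1) := by
        rw [Finset.Ico_add_one_right_eq_Icc]
      have e2 : Finset.Icc 1 (n + 1) = Finset.Ico 1 (n + 2) := by
        exact (Finset.Ico_add_one_right_eq_Icc (a := 1) (b := n + 1)).symm
      rw [e1, e2, Finset.sum_Ico_eq_sum_range, Finset.sum_Ico_eq_sum_range]
      simp only [Nat.add_sub_cancel_left, Nat.succ_sub_one, Finset.mul_sum]
      rw [Finset.sum_range_succ']
      congr 1
      · exact Finset.sum_congr rfl fun i _ => by ring
      · simp
    have hfn1 : PowerSeries.coeff n (f ^ (n + 1)) = 0 :=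
      coeff_pgf_pow_of_lt a b (n + 1) n (Nat.lt_succ_self n)
    have : PowerSeries.coeff n (f * ∑ k ∈ Finset.Icc 1 n, f ^ k) + PowerSeries.coeff n f
        = PowerSeries.coeff n W := by
      rw [← map_add, hgeo, hS (n + 1) n (Nat.le_succ n)]
    rw [sub_mul, one_mul, map_sub, hmulW]
    linarith [this]
  -- deduce the statement by multiplying by (1 - X)²
  have hP : (1 - PowerSeries.X) ^ 2 * f =
      PowerSeries.C ((a : ℤ) + b) * PowerSeries.X -
        PowerSeries.C (b : ℤ) * PowerSeries.X ^ 2 := by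
    have expand : (1 - PowerSeries.X) ^ 2 * f =
        PowerSeries.C (a : ℤ) * PowerSeries.X * ((1 - PowerSeries.X) * geoZ) ^ 2 +
          PowerSeries.C (b : ℤ) * PowerSeries.X * (1 - PowerSeries.X) *
            ((1 - PowerSeries.X) * geoZ) := by
      rw [hf, pgf]; ring
    rw [expand, geoZ_mul, map_add]
    ring
  have hQ : 1 - PowerSeries.C ((a : ℤ) + b + 2) * PowerSeries.X +
      PowerSeries.C ((b : ℤ) + 1) * PowerSeries.X ^ 2 =
      (1 - PowerSeries.X) ^ 2 * (1 - f) := by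
    have expand : (1 - PowerSeries.X) ^ 2 * (1 - f) =
        (1 - PowerSeries.X) ^ 2 - (1 - PowerSeries.X) ^ 2 * f := by ring
    rw [expand, hP]
    simp only [map_add, map_one, map_ofNat]
    ring
  rw [hQ, mul_assoc, key, hP]
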